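/- arXiv:1406.0981 — 5 statements merged into one kernel-verified Lean document; each statement's English description precedes it below -/
import Mathlib

section
/- In the quaternion algebra B = ℍ[ℚ, −q, −p] with q, p positive rationals, let ω be an element of ℚ·1 + ℚ·i, not in ℚ·1, with reduced trace t and reduced norm n, and set D := t² − 4n. Then the Gram matrix of the bilinear form ⟨x, y⟩ := Nrd(x + y) − Nrd(x) − Nrd(y) on the basis (1, ω, j, ωj) of B has determinant D²p². -/
open Quaternion

set_option maxHeartbeats 1600000

/-- The reduced norm on the quaternion algebra `ℍ[ℚ, a, b]`. -/
noncomputable def Nrd {a b : ℚ} (α : ℍ[ℚ, a, b]) : ℚ := (α * star α).re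

/-- The reduced trace on the quaternion algebra `ℍ[ℚ, a, b]`. -/
noncomputable def Trd {a b : ℚ} (α : ℍ[ℚ, a, b]) : ℚ := (α + star α).re

/-- The bilinear form associated to the reduced norm. -/
noncomputable def bil {a b : ℚ} (x y : ℍ[ℚ, a, b]) : ℚ := Nrd (x + y) - Nrd x - Nrd y

/-- In `B = ℍ[ℚ, −q, −p]` with `q, p > 0`, let `ω ∈ ℚ·1 + ℚ·i`, `ω ∉ ℚ·1`, with reduced trace `t`
and reduced norm `n`, and `D := t² − 4n`.  Then the Gram matrix of the bilinear form of the
reduced norm on the basis `(1, ω, j, ωj)` has determinant `D²p²`. -/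
theorem gram_det_eq (q p : ℚ) (hq : 0 < q) (hp : 0 < p)
    (ω : ℍ[ℚ, -q, -p])
    (hω : ω ∈ Submodule.span ℚ ({1, ⟨0,1,0,0⟩} : Set ℍ[ℚ, -q, -p]))
    (hω' : ω ∉ Submodule.span ℚ ({1} : Set ℍ[ℚ, -q, -p]))
    (t n D : ℚ) (ht : Trd ω = t) (hn : Nrd ω = n) (hD : D = t ^ 2 - 4 * n) :
    (Matrix.of fun i j : Fin 4 =>
        bil (![1, ω, ⟨0,0,1,0⟩, ω * ⟨0,0,1,0⟩] i) (![1, ω, ⟨0,0,1,0⟩, ω * ⟨0,0,1,0⟩] j)).det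
      = D ^ 2 * p ^ 2 := by
  obtain ⟨a, b, hab⟩ := Submodule.mem_span_pair.mp hω
  have hω2 : ω = ⟨a, b, 0, 0⟩ := by
    rw [← hab]; ext <;> simp
  subst hω2 hD
  subst ht hn
  have hM : (Matrix.of fun i j : Fin 4 =>
        bil (![1, ⟨a,b,0,0⟩, ⟨0,0,1,0⟩, (⟨a,b,0,0⟩ : ℍ[ℚ,-q,-p]) * ⟨0,0,1,0⟩] i)
            (![1, ⟨a,b,0,0⟩, ⟨0,0,1,0⟩, (⟨a,b,0,0⟩ : ℍ[ℚ,-q,-p]) * ⟨0,0,1,0⟩] j)) =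
      !![2, 2*a, 0, 0; 2*a, 2*(a^2+q*b^2), 0, 0; 0, 0, 2*p, 2*p*a;
         0, 0, 2*p*a, 2*(p*a^2+q*p*b^2)] := by
    ext i j
    fin_cases i <;> fin_cases j <;>
      simp [bil, Nrd, QuaternionAlgebra.re_mul, QuaternionAlgebra.imI_mul,
        QuaternionAlgebra.imJ_mul, QuaternionAlgebra.imK_mul, Matrix.vecHead,
        Matrix.vecTail] <;> ring
  rw [hM]
  have hTrd : Trd (⟨a,b,0,0⟩ : ℍ[ℚ,-q,-p]) = 2*a := by simp [Trd]; ring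
  have hNrd : Nrd (⟨a,b,0,0⟩ : ℍ[ℚ,-q,-p]) = a^2+q*b^2 := by
    simp [Nrd, QuaternionAlgebra.re_mul]; ring
  rw [hTrd, hNrd]
  simp [Matrix.det_succ_row_zero, Fin.sum_univ_succ, Fin.succAbove, Matrix.vecHead,
    Matrix.vecTail]
  ring
end

section
/- Let K be an imaginary quadratic number field with ring of integers R, and let p be a prime number that is inert in R. If 𝔞 is a fractional R-ideal with R ⊆ 𝔞 such that p·N_{K/ℚ}(β) is a rational integer for every β ∈ 𝔞, then 𝔞 = R. -/
open NumberField Polynomial FractionalIdeal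

lemma exists_two_embeddings (K : Type*) [Field K] [NumberField K]
    (hquad : Module.finrank ℚ K = 2) :
    ∃ σ τ : K →ₐ[ℚ] ℂ,
      (∀ β : K, algebraMap ℚ ℂ (Algebra.norm ℚ β) = σ β * τ β) ∧
      (∀ β : K, algebraMap ℚ ℂ (Algebra.trace ℚ K β) = σ β + τ β) := by
  classical
  have hcard : Nat.card (K →ₐ[ℚ] ℂ) = 2 := by
    rw [Nat.card_eq_fintype_card, AlgHom.card]; exact hquad
  obtain ⟨σ, τ, hne, huniv⟩ := Nat.card_eq_two_iff.mp hcard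
  have hfin : (Finset.univ : Finset (K →ₐ[ℚ] ℂ)) = {σ, τ} := by
    ext x
    simp only [Finset.mem_univ, Finset.mem_insert, Finset.mem_singleton, true_iff]
    have : x ∈ ({σ, τ} : Set (K →ₐ[ℚ] ℂ)) := huniv ▸ Set.mem_univ x
    simpa using this
  refine ⟨σ, τ, fun β => ?_, fun β => ?_⟩
  · rw [Algebra.norm_eq_prod_embeddings, hfin,
      Finset.prod_insert (by simpa using hne), Finset.prod_singleton]
  · rw [trace_eq_sum_embeddings, hfin,
      Finset.sum_insert (by simpa using hne), Finset.sum_singleton]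

/-- Let `K` be an imaginary quadratic number field with ring of integers `R`, and `p` a prime
number that is inert in `R`.  If `𝔞` is a fractional `R`-ideal with `R ⊆ 𝔞` such that
`p · N_{K/ℚ}(β)` is a rational integer for every `β ∈ 𝔞`, then `𝔞 = R`. -/
theorem fractionalIdeal_eq_ringOfIntegers
    (K : Type*) [Field K] [NumberField K]
    (hquad : Module.finrank ℚ K = 2)
    (himag : IsEmpty (K →+* ℝ))
    (p : ℕ) (hp : p.Prime)
    (hinert : (Ideal.span {(p : 𝓞 K)}).IsPrime)
    (𝔞 : FractionalIdeal (nonZeroDivisors (𝓞 K)) K)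
    (hsub : 1 ≤ 𝔞)
    (hnorm : ∀ β ∈ 𝔞, ∃ m : ℤ, (p : ℚ) * Algebra.norm ℚ β = (m : ℚ)) :
    𝔞 = 1 := by
  obtain ⟨σ, τ, hN, hT⟩ := exists_two_embeddings K hquad
  have hpK : (p : K) ≠ 0 := Nat.cast_ne_zero.mpr hp.ne_zero
  have hpQ : (p : ℚ) ≠ 0 := Nat.cast_ne_zero.mpr hp.ne_zero
  -- trace in terms of norms
  have htr : ∀ β : K, Algebra.trace ℚ K β
      = Algebra.norm ℚ (β + 1) - Algebra.norm ℚ β - 1 := by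
    intro β
    apply (algebraMap ℚ ℂ).injective
    simp only [_root_.map_sub, _root_.map_add, _root_.map_one, hN, hT]
    ring
  -- quadratic relation
  have hquadrel : ∀ β : K, β ^ 2
      - algebraMap ℚ K (Algebra.trace ℚ K β) * β
      + algebraMap ℚ K (Algebra.norm ℚ β) = 0 := by
    intro β
    apply σ.toRingHom.injective
    show σ (β ^ 2 - algebraMap ℚ K (Algebra.trace ℚ K β) * β
      + algebraMap ℚ K (Algebra.norm ℚ β)) = σ 0
    simp only [_root_.map_add, _root_.map_sub, _root_.map_mul, map_pow, _root_.map_zero,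
      AlgHom.commutes, hN, hT]
    ring
  have h1 : (1 : K) ∈ 𝔞 := hsub (one_mem_one _)
  -- integrality of p•β for β ∈ 𝔞
  have hint : ∀ β ∈ 𝔞, IsIntegral ℤ ((p : K) * β) := by
    intro β hβ
    have hβ1 : β + 1 ∈ 𝔞 := (𝔞 : Submodule (𝓞 K) K).add_mem hβ h1
    obtain ⟨n, hn⟩ := hnorm β hβ
    obtain ⟨n', hn'⟩ := hnorm (β + 1) hβ1
    have ht : (p : ℚ) * Algebra.trace ℚ K β = ((n' - n - (p : ℤ) : ℤ) : ℚ) := by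
      rw [htr β]; push_cast; rw [← hn, ← hn']; ring
    refine ⟨X ^ 2 - C (n' - n - (p : ℤ)) * X + C ((p : ℤ) * n), ?_, ?_⟩
    · have heq : (X ^ 2 - C (n' - n - (p : ℤ)) * X + C ((p : ℤ) * n) : ℤ[X])
          = X ^ 2 - (C (n' - n - (p : ℤ)) * X - C ((p : ℤ) * n)) := by ring
      rw [heq]
      refine monic_X_pow_sub (lt_of_le_of_lt ?_ (by norm_num : (1 : WithBot ℕ) < 2))
      rw [sub_eq_add_neg, ← C_neg]
      exact degree_linear_le
    · have e1 : ((n' - n - (p : ℤ) : ℤ) : K)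
          = algebraMap ℚ K ((p : ℚ) * Algebra.trace ℚ K β) := by
        rw [ht, map_intCast]
      have e2 : (((p : ℤ) * n : ℤ) : K)
          = algebraMap ℚ K ((p : ℚ) * ((p : ℚ) * Algebra.norm ℚ β)) := by
        rw [hn, _root_.map_mul, map_natCast, map_intCast]; push_cast; ring
      have key : ((p : K) * β) ^ 2 - ((n' - n - (p : ℤ) : ℤ) : K) * ((p : K) * β)
          + (((p : ℤ) * n : ℤ) : K) = 0 := by
        rw [e1, e2, _root_.map_mul, _root_.map_mul, _root_.map_mul, map_natCast]
        linear_combination ((p : K)) ^ 2 * hquadrel β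
      calc (Polynomial.aeval ((p : K) * β)) (X ^ 2 - C (n' - n - (p : ℤ)) * X + C ((p : ℤ) * n))
          = ((p : K) * β) ^ 2 - ((n' - n - (p : ℤ) : ℤ) : K) * ((p : K) * β)
            + (((p : ℤ) * n : ℤ) : K) := by
            simp only [_root_.map_add, _root_.map_sub, _root_.map_mul, map_pow, aeval_X, aeval_C,
              eq_intCast]
            push_cast
            simp only [map_intCast, map_natCast]
            try ring
        _ = 0 := key
  -- 𝔞 ≤ (1/p)
  have hsub' : 𝔞 ≤ spanSingleton (nonZeroDivisors (𝓞 K)) ((p : K)⁻¹) := by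
    intro β hβ
    have hβ' : β ∈ 𝔞 := hβ
    show β ∈ spanSingleton (nonZeroDivisors (𝓞 K)) ((p : K)⁻¹)
    rw [mem_spanSingleton]
    refine ⟨⟨(p : K) * β, hint β hβ'⟩, ?_⟩
    show ((p : K) * β) * (p : K)⁻¹ = β
    field_simp
  have hb1 : spanSingleton (nonZeroDivisors (𝓞 K)) ((p : K)) * 𝔞 ≤ 1 := by
    calc spanSingleton (nonZeroDivisors (𝓞 K)) ((p : K)) * 𝔞
        ≤ spanSingleton _ ((p : K)) * spanSingleton _ ((p : K)⁻¹) :=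
          mul_right_mono hsub'
      _ = 1 := by
          rw [spanSingleton_mul_spanSingleton, mul_inv_cancel₀ hpK, spanSingleton_one]
  obtain ⟨I, hI⟩ := le_one_iff_exists_coeIdeal.mp hb1
  have hcoe : ((Ideal.span {(p : 𝓞 K)} : Ideal (𝓞 K)) : FractionalIdeal (nonZeroDivisors (𝓞 K)) K)
      = spanSingleton (nonZeroDivisors (𝓞 K)) ((p : K)) := by
    rw [coeIdeal_span_singleton, map_natCast]
  have hspan_le : Ideal.span {(p : 𝓞 K)} ≤ I := by
    rw [← coeIdeal_le_coeIdeal K, hI, hcoe]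
    calc spanSingleton (nonZeroDivisors (𝓞 K)) ((p : K))
        = spanSingleton (nonZeroDivisors (𝓞 K)) ((p : K)) * 1 := (mul_one _).symm
      _ ≤ _ := mul_right_mono hsub
  have hpO : (p : 𝓞 K) ≠ 0 := Nat.cast_ne_zero.mpr hp.ne_zero
  have hmax : (Ideal.span {(p : 𝓞 K)}).IsMaximal :=
    Ideal.IsPrime.isMaximal hinert (by simpa [Ideal.span_singleton_eq_bot] using hpO)
  rcases hspan_le.lt_or_eq with hlt | heq
  · -- I = ⊤, leading to contradiction
    have hItop : I = ⊤ := by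
      by_contra hne
      exact absurd (hmax.eq_of_le hne hspan_le) hlt.ne
    rw [hItop, coeIdeal_top] at hI
    -- then p⁻¹ ∈ 𝔞
    have h𝔞eq : 𝔞 = spanSingleton (nonZeroDivisors (𝓞 K)) ((p : K)⁻¹) := by
      have := congrArg (spanSingleton (nonZeroDivisors (𝓞 K)) ((p : K)⁻¹) * ·) hI
      rw [← mul_assoc, spanSingleton_mul_spanSingleton, inv_mul_cancel₀ hpK,
        spanSingleton_one, one_mul, mul_one] at this
      exact this.symm
    have hmem : (p : K)⁻¹ ∈ 𝔞 := h𝔞eq ▸ mem_spanSingleton_self _ _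
    obtain ⟨m, hm⟩ := hnorm _ hmem
    have hval : ((p : K))⁻¹ = algebraMap ℚ K ((p : ℚ)⁻¹) := by
      simp [map_inv₀]
    rw [hval, Algebra.norm_algebraMap, hquad] at hm
    have hmp : (m : ℚ) * (p : ℚ) = 1 := by
      rw [← hm]; field_simp
    have hmpZ : m * (p : ℤ) = 1 := by exact_mod_cast hmp
    have hdvd : (p : ℤ) ∣ 1 := ⟨m, by linarith [hmpZ]⟩
    have hle := Int.le_of_dvd one_pos hdvd
    have h2 : 2 ≤ p := hp.two_le
    omega
  · -- I = span {p}, so 𝔞 = 1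
    rw [← heq, hcoe] at hI
    have hne : spanSingleton (nonZeroDivisors (𝓞 K)) ((p : K)) ≠ 0 :=
      spanSingleton_ne_zero_iff.mpr hpK
    apply mul_left_cancel₀ hne
    rw [← hI, mul_one]
end

section
/- Let p ≡ 3 (mod 4) be a prime and work in ℍ[ℚ, −1, −p]. Then each of the two ℤ-submodules O₁ := ℤ·1 + ℤ·i + ℤ·(1+j)/2 + ℤ·(i+k)/2 and O₂ := ℤ·1 + ℤ·i + ℤ·(1+k)/2 + ℤ·(i−j)/2 is a maximal order in ℍ[ℚ, −1, −p], each contains the subring ℤ·1 + ℤ·i + ℤ·j + ℤ·k, and the quotient of each by ℤ·1 + ℤ·i + ℤ·j + ℤ·k, as an additive group, has exactly 4 elements. -/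
open Quaternion

/-- An order in `ℍ[ℚ, a, b]`: a subring containing 1 that spans the algebra over `ℚ` and all of
whose elements have reduced trace and reduced norm in `ℤ`. -/
def IsOrder {a b : ℚ} (O : Set ℍ[ℚ, a, b]) : Prop :=
  (∃ S : Subring ℍ[ℚ, a, b], (S : Set ℍ[ℚ, a, b]) = O) ∧
  Submodule.span ℚ O = ⊤ ∧
  ∀ x ∈ O, (∃ t : ℤ, Trd x = (t : ℚ)) ∧ (∃ n : ℤ, Nrd x = (n : ℚ))

/-- A maximal order: an order not properly contained in any other order. -/
def IsMaximalOrder {a b : ℚ} (O : Set ℍ[ℚ, a, b]) : Prop :=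
  IsOrder O ∧ ∀ O' : Set ℍ[ℚ, a, b], IsOrder O' → O ⊆ O' → O' = O

/-- The suborder `ℤ·1 + ℤ·i + ℤ·j + ℤ·k` of `ℍ[ℚ, a, b]`, as a `ℤ`-submodule. -/
def stdLattice (a b : ℚ) : Submodule ℤ ℍ[ℚ, a, b] :=
  Submodule.span ℤ ({1, ⟨0,1,0,0⟩, ⟨0,0,1,0⟩, ⟨0,0,0,1⟩} : Set ℍ[ℚ, a, b])

/-- The `ℤ`-submodule `ℤ·1 + ℤ·i + ℤ·(1+j)/2 + ℤ·(i+k)/2` of `ℍ[ℚ, −1, −p]`. -/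
def Ord₁ (p : ℚ) : Submodule ℤ ℍ[ℚ, -1, -p] :=
  Submodule.span ℤ ({1, ⟨0,1,0,0⟩,
    ((2:ℚ)⁻¹) • (1 + (⟨0,0,1,0⟩ : ℍ[ℚ, -1, -p])),
    ((2:ℚ)⁻¹) • ((⟨0,1,0,0⟩ : ℍ[ℚ, -1, -p]) + ⟨0,0,0,1⟩)} : Set ℍ[ℚ, -1, -p])

/-- The `ℤ`-submodule `ℤ·1 + ℤ·i + ℤ·(1+k)/2 + ℤ·(i−j)/2` of `ℍ[ℚ, −1, −p]`. -/
def Ord₂ (p : ℚ) : Submodule ℤ ℍ[ℚ, -1, -p] :=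
  Submodule.span ℤ ({1, ⟨0,1,0,0⟩,
    ((2:ℚ)⁻¹) • (1 + (⟨0,0,0,1⟩ : ℍ[ℚ, -1, -p])),
    ((2:ℚ)⁻¹) • ((⟨0,1,0,0⟩ : ℍ[ℚ, -1, -p]) - ⟨0,0,1,0⟩)} : Set ℍ[ℚ, -1, -p])

lemma trd_eq {a b : ℚ} (α : ℍ[ℚ,a,b]) : Trd α = 2*α.re := by
  simp [Trd]; ring

lemma nrd_eq {a b : ℚ} (α : ℍ[ℚ,a,b]) :
    Nrd α = α.re^2 - a*α.imI^2 - b*α.imJ^2 + a*b*α.imK^2 := by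
  simp [Nrd, QuaternionAlgebra.re_mul]; ring

section MemLemmas

-- generic helper to unfold a span of 4 elements
lemma mem_span_four {a b : ℚ} (g₁ g₂ g₃ g₄ x : ℍ[ℚ,a,b]) :
    x ∈ Submodule.span ℤ ({g₁, g₂, g₃, g₄} : Set ℍ[ℚ,a,b]) ↔
      ∃ a b c d : ℤ, x = a • g₁ + b • g₂ + c • g₃ + d • g₄ := by
  constructor
  · intro hx
    rw [Submodule.mem_span_insert] at hx
    obtain ⟨a, y, hy, rfl⟩ := hx
    rw [Submodule.mem_span_insert] at hy
    obtain ⟨b, y, hy, rfl⟩ := hy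
    rw [Submodule.mem_span_insert] at hy
    obtain ⟨c, y, hy, rfl⟩ := hy
    rw [Submodule.mem_span_singleton] at hy
    obtain ⟨d, rfl⟩ := hy
    exact ⟨a, b, c, d, by simp only [add_assoc]⟩
  · rintro ⟨a, b, c, d, rfl⟩
    refine Submodule.add_mem _ (Submodule.add_mem _ (Submodule.add_mem _ ?_ ?_) ?_) ?_ <;>
      exact Submodule.smul_mem _ _ (Submodule.subset_span (by simp))

lemma mem_ord₁ {p : ℚ} (x : ℍ[ℚ,-1,-p]) :
    x ∈ Ord₁ p ↔ ∃ a b c d : ℤ,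
      x.re = a + c/2 ∧ x.imI = b + d/2 ∧ x.imJ = c/2 ∧ x.imK = d/2 := by
  rw [Ord₁, mem_span_four]
  constructor
  · rintro ⟨a, b, c, d, rfl⟩
    exact ⟨a, b, c, d, by simp [QuaternionAlgebra.smul_mk]; ring,
      by simp [QuaternionAlgebra.smul_mk]; ring,
      by simp [QuaternionAlgebra.smul_mk]; ring,
      by simp [QuaternionAlgebra.smul_mk]; ring⟩
  · rintro ⟨a, b, c, d, h1, h2, h3, h4⟩
    exact ⟨a, b, c, d, by ext <;> simp [h1, h2, h3, h4, QuaternionAlgebra.smul_mk] <;> ring⟩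

lemma mem_ord₂ {p : ℚ} (x : ℍ[ℚ,-1,-p]) :
    x ∈ Ord₂ p ↔ ∃ a b c d : ℤ,
      x.re = a + c/2 ∧ x.imI = b + d/2 ∧ x.imJ = -d/2 ∧ x.imK = c/2 := by
  rw [Ord₂, mem_span_four]
  constructor
  · rintro ⟨a, b, c, d, rfl⟩
    exact ⟨a, b, c, d, by simp [QuaternionAlgebra.smul_mk]; ring,
      by simp [QuaternionAlgebra.smul_mk]; ring,
      by simp [QuaternionAlgebra.smul_mk]; ring,
      by simp [QuaternionAlgebra.smul_mk]; ring⟩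
  · rintro ⟨a, b, c, d, h1, h2, h3, h4⟩
    exact ⟨a, b, c, d, by ext <;> simp [h1, h2, h3, h4, QuaternionAlgebra.smul_mk] <;> ring⟩

lemma mem_std {a b : ℚ} (x : ℍ[ℚ,a,b]) :
    x ∈ stdLattice a b ↔ ∃ a' b' c' d' : ℤ,
      x.re = a' ∧ x.imI = b' ∧ x.imJ = c' ∧ x.imK = d' := by
  rw [stdLattice, mem_span_four]
  constructor
  · rintro ⟨a', b', c', d', rfl⟩
    exact ⟨a', b', c', d', by simp, by simp, by simp, by simp⟩
  · rintro ⟨a', b', c', d', h1, h2, h3, h4⟩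
    exact ⟨a', b', c', d', by ext <;> simp [h1, h2, h3, h4]⟩

end MemLemmas

section Mul
variable {p : ℚ} {m : ℤ} (hpm : p = 4*m+3)

lemma ord₁_mul_mem (hpm : p = 4*m+3) {x y : ℍ[ℚ,-1,-p]}
    (hx : x ∈ Ord₁ p) (hy : y ∈ Ord₁ p) : x * y ∈ Ord₁ p := by
  subst hpm
  rw [mem_ord₁] at hx hy ⊢
  obtain ⟨a, b, c, d, h1, h2, h3, h4⟩ := hx
  obtain ⟨a', b', c', d', g1, g2, g3, g4⟩ := hy
  refine ⟨a*a' - b*b' - b'*d - (m+1)*(c*c'+d*d'),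
    a*b' + a'*b + b'*c + (m+1)*(c*d' - c'*d),
    a*c' + c*c' - b*d' + a'*c + b'*d,
    a*d' + b*c' + d*c' - b'*c + a'*d, ?_, ?_, ?_, ?_⟩
  · rw [QuaternionAlgebra.re_mul, h1, h2, h3, h4, g1, g2, g3, g4]; push_cast; ring
  · rw [QuaternionAlgebra.imI_mul, h1, h2, h3, h4, g1, g2, g3, g4]; push_cast; ring
  · rw [QuaternionAlgebra.imJ_mul, h1, h2, h3, h4, g1, g2, g3, g4]; push_cast; ring
  · rw [QuaternionAlgebra.imK_mul, h1, h2, h3, h4, g1, g2, g3, g4]; push_cast; ring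

lemma ord₂_mul_mem (hpm : p = 4*m+3) {x y : ℍ[ℚ,-1,-p]}
    (hx : x ∈ Ord₂ p) (hy : y ∈ Ord₂ p) : x * y ∈ Ord₂ p := by
  subst hpm
  rw [mem_ord₂] at hx hy ⊢
  obtain ⟨a, b, c, d, h1, h2, h3, h4⟩ := hx
  obtain ⟨a', b', c', d', g1, g2, g3, g4⟩ := hy
  refine ⟨a*a' - b*b' - b'*d - (m+1)*(c*c'+d*d'),
    a*b' + a'*b + b'*c + (m+1)*(c*d' - c'*d),
    a*c' + c*c' - b*d' + a'*c + b'*d,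
    a*d' + b*c' + d*c' - b'*c + a'*d, ?_, ?_, ?_, ?_⟩
  · rw [QuaternionAlgebra.re_mul, h1, h2, h3, h4, g1, g2, g3, g4]; push_cast; ring
  · rw [QuaternionAlgebra.imI_mul, h1, h2, h3, h4, g1, g2, g3, g4]; push_cast; ring
  · rw [QuaternionAlgebra.imJ_mul, h1, h2, h3, h4, g1, g2, g3, g4]; push_cast; ring
  · rw [QuaternionAlgebra.imK_mul, h1, h2, h3, h4, g1, g2, g3, g4]; push_cast; ring

end Mul

section IsOrderDefs


variable {p : ℚ} {m : ℤ}

lemma one_mem₁ : (1 : ℍ[ℚ,-1,-p]) ∈ Ord₁ p :=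
  (mem_ord₁ _).mpr ⟨1, 0, 0, 0, by simp, by simp, by simp, by simp⟩
lemma i_mem₁ : (⟨0,1,0,0⟩ : ℍ[ℚ,-1,-p]) ∈ Ord₁ p :=
  (mem_ord₁ _).mpr ⟨0, 1, 0, 0, by simp, by simp, by simp, by simp⟩
lemma j_mem₁ : (⟨0,0,1,0⟩ : ℍ[ℚ,-1,-p]) ∈ Ord₁ p :=
  (mem_ord₁ _).mpr ⟨-1, 0, 2, 0, by norm_num, by simp, by norm_num, by simp⟩
lemma k_mem₁ : (⟨0,0,0,1⟩ : ℍ[ℚ,-1,-p]) ∈ Ord₁ p :=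
  (mem_ord₁ _).mpr ⟨0, -1, 0, 2, by simp, by norm_num, by simp, by norm_num⟩

lemma one_mem₂ : (1 : ℍ[ℚ,-1,-p]) ∈ Ord₂ p :=
  (mem_ord₂ _).mpr ⟨1, 0, 0, 0, by simp, by simp, by simp, by simp⟩
lemma i_mem₂ : (⟨0,1,0,0⟩ : ℍ[ℚ,-1,-p]) ∈ Ord₂ p :=
  (mem_ord₂ _).mpr ⟨0, 1, 0, 0, by simp, by simp, by simp, by simp⟩
lemma j_mem₂ : (⟨0,0,1,0⟩ : ℍ[ℚ,-1,-p]) ∈ Ord₂ p :=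
  (mem_ord₂ _).mpr ⟨0, 1, 0, -2, by simp, by norm_num, by norm_num, by simp⟩
lemma k_mem₂ : (⟨0,0,0,1⟩ : ℍ[ℚ,-1,-p]) ∈ Ord₂ p :=
  (mem_ord₂ _).mpr ⟨-1, 0, 2, 0, by norm_num, by simp, by simp, by norm_num⟩

lemma span_top_of_basis_mem {a b : ℚ} (O : Submodule ℤ ℍ[ℚ,a,b])
    (h1 : (1 : ℍ[ℚ,a,b]) ∈ O) (hi : (⟨0,1,0,0⟩ : ℍ[ℚ,a,b]) ∈ O)
    (hj : (⟨0,0,1,0⟩ : ℍ[ℚ,a,b]) ∈ O) (hk : (⟨0,0,0,1⟩ : ℍ[ℚ,a,b]) ∈ O) :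
    Submodule.span ℚ (O : Set ℍ[ℚ,a,b]) = ⊤ := by
  rw [eq_top_iff]
  rintro x -
  have hx : x = x.re • (1 : ℍ[ℚ,a,b]) + x.imI • (⟨0,1,0,0⟩ : ℍ[ℚ,a,b])
      + x.imJ • (⟨0,0,1,0⟩ : ℍ[ℚ,a,b]) + x.imK • (⟨0,0,0,1⟩ : ℍ[ℚ,a,b]) := by
    ext <;> simp
  rw [hx]
  refine Submodule.add_mem _ (Submodule.add_mem _ (Submodule.add_mem _ ?_ ?_) ?_) ?_ <;>
    exact Submodule.smul_mem _ _ (Submodule.subset_span (by assumption))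

lemma exists_subring {a b : ℚ} (O : Submodule ℤ ℍ[ℚ,a,b]) (h1 : (1:ℍ[ℚ,a,b]) ∈ O)
    (hm : ∀ {x y : ℍ[ℚ,a,b]}, x ∈ O → y ∈ O → x*y ∈ O) :
    ∃ S : Subring ℍ[ℚ,a,b], (S : Set ℍ[ℚ,a,b]) = O := by
  refine ⟨{ carrier := O
            one_mem' := h1
            mul_mem' := fun hx hy => hm hx hy
            zero_mem' := O.zero_mem
            add_mem' := fun hx hy => O.add_mem hx hy
            neg_mem' := fun hx => O.neg_mem hx }, rfl⟩

lemma isOrder₁ (hpm : p = 4*m+3) : IsOrder ((Ord₁ p : Set ℍ[ℚ,-1,-p])) := by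
  refine ⟨exists_subring _ one_mem₁ (fun hx hy => ord₁_mul_mem hpm hx hy),
    span_top_of_basis_mem _ one_mem₁ i_mem₁ j_mem₁ k_mem₁, ?_⟩
  intro x hx
  rw [SetLike.mem_coe, mem_ord₁] at hx
  obtain ⟨a, b, c, d, h1, h2, h3, h4⟩ := hx
  subst hpm
  constructor
  · exact ⟨2*a+c, by rw [trd_eq, h1]; push_cast; ring⟩
  · exact ⟨a^2+a*c+b^2+b*d+(m+1)*(c^2+d^2),
      by rw [nrd_eq, h1, h2, h3, h4]; push_cast; ring⟩

lemma isOrder₂ (hpm : p = 4*m+3) : IsOrder ((Ord₂ p : Set ℍ[ℚ,-1,-p])) := by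
  refine ⟨exists_subring _ one_mem₂ (fun hx hy => ord₂_mul_mem hpm hx hy),
    span_top_of_basis_mem _ one_mem₂ i_mem₂ j_mem₂ k_mem₂, ?_⟩
  intro x hx
  rw [SetLike.mem_coe, mem_ord₂] at hx
  obtain ⟨a, b, c, d, h1, h2, h3, h4⟩ := hx
  subst hpm
  constructor
  · exact ⟨2*a+c, by rw [trd_eq, h1]; push_cast; ring⟩
  · exact ⟨a^2+a*c+b^2+b*d+(m+1)*(c^2+d^2),
      by rw [nrd_eq, h1, h2, h3, h4]; push_cast; ring⟩

end IsOrderDefs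

section Max

lemma two_sq_helper (p : ℕ) (hp : p.Prime) (hp3 : p % 4 = 3) (a b : ℤ)
    (h : (p:ℤ) ∣ a^2 + b^2) : (p:ℤ) ∣ a ∧ (p:ℤ) ∣ b := by
  haveI : Fact p.Prime := ⟨hp⟩
  have key : ∀ a b : ℤ, (p:ℤ) ∣ a^2 + b^2 → (p:ℤ) ∣ a := by
    intro a b h
    by_contra ha
    have ha' : (a : ZMod p) ≠ 0 := by
      rwa [Ne, ZMod.intCast_zmod_eq_zero_iff_dvd]
    have h0 : (a : ZMod p)^2 + (b : ZMod p)^2 = 0 := by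
      have := (ZMod.intCast_zmod_eq_zero_iff_dvd _ p).mpr h
      push_cast at this
      linear_combination this
    have : IsSquare (-1 : ZMod p) := by
      refine ⟨(b : ZMod p) / (a : ZMod p), ?_⟩
      field_simp
      linear_combination -h0
    rw [ZMod.exists_sq_eq_neg_one_iff] at this
    exact this hp3
  exact ⟨key a b h, key b a (by rwa [add_comm])⟩

lemma max₁ (p : ℕ) (hp : p.Prime) (hp3 : p % 4 = 3) (m : ℤ) (hpm : (p:ℚ) = 4*m+3)
    (O' : Set ℍ[ℚ,-1,-(p:ℚ)]) (hO' : IsOrder O') (hsub : ↑(Ord₁ (p:ℚ)) ⊆ O') :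
    O' = ↑(Ord₁ (p:ℚ)) := by
  have hp0 : (p:ℚ) ≠ 0 := Nat.cast_ne_zero.mpr hp.ne_zero
  obtain ⟨S, hS⟩ := hO'.1
  have hTN := hO'.2.2
  refine Set.Subset.antisymm ?_ hsub
  intro x hx
  -- products with elements of Ord₁ stay in O'
  have hmul : ∀ e : ℍ[ℚ,-1,-(p:ℚ)], e ∈ Ord₁ (p:ℚ) → x * e ∈ O' := by
    intro e he
    have hxS : x ∈ S := by rw [← hS] at hx; exact hx
    have heS : e ∈ S := by
      have := hsub he
      rw [← hS] at this; exact this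
    have : x * e ∈ S := S.mul_mem hxS heS
    rw [← hS]; exact this
  obtain ⟨t0, ht0⟩ := (hTN x hx).1
  obtain ⟨n, hn⟩ := (hTN x hx).2
  obtain ⟨t1, ht1⟩ := (hTN _ (hmul _ i_mem₁)).1
  obtain ⟨t2, ht2⟩ := (hTN _ (hmul _ j_mem₁)).1
  obtain ⟨t3, ht3⟩ := (hTN _ (hmul _ k_mem₁)).1
  have g₃_mem : ((2:ℚ)⁻¹ • (1 + (⟨0,0,1,0⟩:ℍ[ℚ,-1,-(p:ℚ)]))) ∈ Ord₁ (p:ℚ) :=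
    Submodule.subset_span (by simp)
  have g₄_mem : ((2:ℚ)⁻¹ • ((⟨0,1,0,0⟩:ℍ[ℚ,-1,-(p:ℚ)]) + ⟨0,0,0,1⟩)) ∈ Ord₁ (p:ℚ) :=
    Submodule.subset_span (by simp)
  obtain ⟨t4, ht4⟩ := (hTN _ (hmul _ g₃_mem)).1
  obtain ⟨t5, ht5⟩ := (hTN _ (hmul _ g₄_mem)).1
  have f0 : 2*x.re = (t0:ℚ) := by rw [← ht0, trd_eq]
  have f1 : -2*x.imI = (t1:ℚ) := by
    rw [← ht1, trd_eq]; simp [QuaternionAlgebra.re_mul]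
  have f2 : -2*(p:ℚ)*x.imJ = (t2:ℚ) := by
    rw [← ht2, trd_eq]; simp [QuaternionAlgebra.re_mul]; ring
  have f3 : -2*(p:ℚ)*x.imK = (t3:ℚ) := by
    rw [← ht3, trd_eq]; simp [QuaternionAlgebra.re_mul]; ring
  have f4 : x.re - (p:ℚ)*x.imJ = (t4:ℚ) := by
    rw [← ht4, trd_eq]; simp [QuaternionAlgebra.re_mul]; ring
  have f5 : -x.imI - (p:ℚ)*x.imK = (t5:ℚ) := by
    rw [← ht5, trd_eq]; simp [QuaternionAlgebra.re_mul]; ring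
  have f7 : x.re^2 + x.imI^2 + (p:ℚ)*x.imJ^2 + (p:ℚ)*x.imK^2 = (n:ℚ) := by
    rw [← hn, nrd_eq]; ring
  have hQ : ((t2:ℚ))^2 + (t3:ℚ)^2 = (p:ℚ)*(4*(n:ℚ) - (t0:ℚ)^2 - (t1:ℚ)^2) := by
    linear_combination (2*(p:ℚ)*x.imJ - t2)*f2 + (2*(p:ℚ)*x.imK - t3)*f3 + 4*(p:ℚ)*f7
      - (p:ℚ)*((t0:ℚ)+2*x.re)*f0 - (p:ℚ)*((t1:ℚ) - 2*x.imI)*f1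
  have hZ : t2^2 + t3^2 = (p:ℤ)*(4*n - t0^2 - t1^2) := by exact_mod_cast hQ
  obtain ⟨hc, hd⟩ := two_sq_helper p hp hp3 t2 t3 ⟨_, hZ⟩
  obtain ⟨c₂', hc₂'⟩ := hc
  obtain ⟨d₂', hd₂'⟩ := hd
  have fc : (t2:ℚ) = (p:ℚ) * (c₂':ℚ) := by exact_mod_cast hc₂'
  have fd : (t3:ℚ) = (p:ℚ) * (d₂':ℚ) := by exact_mod_cast hd₂'
  have himJ : x.imJ = -(c₂':ℚ)/2 := by
    have h2 : (p:ℚ) * (-2*x.imJ) = (p:ℚ) * (c₂':ℚ) := by linear_combination f2.trans fc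
    have := mul_left_cancel₀ hp0 h2
    linarith [this]
  have himK : x.imK = -(d₂':ℚ)/2 := by
    have h2 : (p:ℚ) * (-2*x.imK) = (p:ℚ) * (d₂':ℚ) := by linear_combination f3.trans fd
    have := mul_left_cancel₀ hp0 h2
    linarith [this]
  have hre : x.re = (t4:ℚ) - (p:ℚ)*(c₂':ℚ)/2 := by linear_combination f4 + (p:ℚ)*himJ
  have himI : x.imI = -(t5:ℚ) + (p:ℚ)*(d₂':ℚ)/2 := by
    linear_combination -f5 - (p:ℚ)*himK
  rw [SetLike.mem_coe, mem_ord₁]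
  refine ⟨t4 - (2*m+1)*c₂', 2*(m+1)*d₂' - t5, -c₂', -d₂', ?_, ?_, ?_, ?_⟩
  · rw [hre, hpm]; push_cast; ring
  · rw [himI, hpm]; push_cast; ring
  · rw [himJ]; push_cast; ring
  · rw [himK]; push_cast; ring

lemma max₂ (p : ℕ) (hp : p.Prime) (hp3 : p % 4 = 3) (m : ℤ) (hpm : (p:ℚ) = 4*m+3)
    (O' : Set ℍ[ℚ,-1,-(p:ℚ)]) (hO' : IsOrder O') (hsub : ↑(Ord₂ (p:ℚ)) ⊆ O') :
    O' = ↑(Ord₂ (p:ℚ)) := by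
  have hp0 : (p:ℚ) ≠ 0 := Nat.cast_ne_zero.mpr hp.ne_zero
  obtain ⟨S, hS⟩ := hO'.1
  have hTN := hO'.2.2
  refine Set.Subset.antisymm ?_ hsub
  intro x hx
  -- products with elements of Ord₂ stay in O'
  have hmul : ∀ e : ℍ[ℚ,-1,-(p:ℚ)], e ∈ Ord₂ (p:ℚ) → x * e ∈ O' := by
    intro e he
    have hxS : x ∈ S := by rw [← hS] at hx; exact hx
    have heS : e ∈ S := by
      have := hsub he
      rw [← hS] at this; exact this
    have : x * e ∈ S := S.mul_mem hxS heS
    rw [← hS]; exact this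
  obtain ⟨t0, ht0⟩ := (hTN x hx).1
  obtain ⟨n, hn⟩ := (hTN x hx).2
  obtain ⟨t1, ht1⟩ := (hTN _ (hmul _ i_mem₂)).1
  obtain ⟨t2, ht2⟩ := (hTN _ (hmul _ j_mem₂)).1
  obtain ⟨t3, ht3⟩ := (hTN _ (hmul _ k_mem₂)).1
  have g₃_mem : ((2:ℚ)⁻¹ • (1 + (⟨0,0,0,1⟩:ℍ[ℚ,-1,-(p:ℚ)]))) ∈ Ord₂ (p:ℚ) :=
    Submodule.subset_span (by simp)
  have g₄_mem : ((2:ℚ)⁻¹ • ((⟨0,1,0,0⟩:ℍ[ℚ,-1,-(p:ℚ)]) - ⟨0,0,1,0⟩)) ∈ Ord₂ (p:ℚ) :=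
    Submodule.subset_span (by simp)
  obtain ⟨t4, ht4⟩ := (hTN _ (hmul _ g₃_mem)).1
  obtain ⟨t5, ht5⟩ := (hTN _ (hmul _ g₄_mem)).1
  have f0 : 2*x.re = (t0:ℚ) := by rw [← ht0, trd_eq]
  have f1 : -2*x.imI = (t1:ℚ) := by
    rw [← ht1, trd_eq]; simp [QuaternionAlgebra.re_mul]
  have f2 : -2*(p:ℚ)*x.imJ = (t2:ℚ) := by
    rw [← ht2, trd_eq]; simp [QuaternionAlgebra.re_mul]; ring
  have f3 : -2*(p:ℚ)*x.imK = (t3:ℚ) := by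
    rw [← ht3, trd_eq]; simp [QuaternionAlgebra.re_mul]; ring
  have f4 : x.re - (p:ℚ)*x.imK = (t4:ℚ) := by
    rw [← ht4, trd_eq]; simp [QuaternionAlgebra.re_mul]; ring
  have f5 : -x.imI + (p:ℚ)*x.imJ = (t5:ℚ) := by
    rw [← ht5, trd_eq]; simp [QuaternionAlgebra.re_mul]; ring
  have f7 : x.re^2 + x.imI^2 + (p:ℚ)*x.imJ^2 + (p:ℚ)*x.imK^2 = (n:ℚ) := by
    rw [← hn, nrd_eq]; ring
  have hQ : ((t2:ℚ))^2 + (t3:ℚ)^2 = (p:ℚ)*(4*(n:ℚ) - (t0:ℚ)^2 - (t1:ℚ)^2) := by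
    linear_combination (2*(p:ℚ)*x.imJ - t2)*f2 + (2*(p:ℚ)*x.imK - t3)*f3 + 4*(p:ℚ)*f7
      - (p:ℚ)*((t0:ℚ)+2*x.re)*f0 - (p:ℚ)*((t1:ℚ) - 2*x.imI)*f1
  have hZ : t2^2 + t3^2 = (p:ℤ)*(4*n - t0^2 - t1^2) := by exact_mod_cast hQ
  obtain ⟨hc, hd⟩ := two_sq_helper p hp hp3 t2 t3 ⟨_, hZ⟩
  obtain ⟨c₂', hc₂'⟩ := hc
  obtain ⟨d₂', hd₂'⟩ := hd
  have fc : (t2:ℚ) = (p:ℚ) * (c₂':ℚ) := by exact_mod_cast hc₂'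
  have fd : (t3:ℚ) = (p:ℚ) * (d₂':ℚ) := by exact_mod_cast hd₂'
  have himJ : x.imJ = -(c₂':ℚ)/2 := by
    have h2 : (p:ℚ) * (-2*x.imJ) = (p:ℚ) * (c₂':ℚ) := by linear_combination f2.trans fc
    have := mul_left_cancel₀ hp0 h2
    linarith [this]
  have himK : x.imK = -(d₂':ℚ)/2 := by
    have h2 : (p:ℚ) * (-2*x.imK) = (p:ℚ) * (d₂':ℚ) := by linear_combination f3.trans fd
    have := mul_left_cancel₀ hp0 h2
    linarith [this]
  have hre : x.re = (t4:ℚ) - (p:ℚ)*(d₂':ℚ)/2 := by linear_combination f4 + (p:ℚ)*himK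
  have himI : x.imI = -(t5:ℚ) - (p:ℚ)*(c₂':ℚ)/2 := by
    linear_combination -f5 + (p:ℚ)*himJ
  rw [SetLike.mem_coe, mem_ord₂]
  refine ⟨t4 - (2*m+1)*d₂', -t5 - 2*(m+1)*c₂', -d₂', c₂', ?_, ?_, ?_, ?_⟩
  · rw [hre, hpm]; push_cast; ring
  · rw [himI, hpm]; push_cast; ring
  · rw [himJ]; try push_cast; try ring
  · rw [himK]; try push_cast; try ring

end Max

section Index

variable {p : ℚ}

noncomputable def num2 : ℚ → ZMod 2 := fun q => ((q.num : ℤ) : ZMod 2)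

lemma num2_intCast (n : ℤ) : num2 ((n:ℚ)) = (n : ZMod 2) := by
  simp [num2]

lemma std_le_ord₁ : stdLattice (-1) (-p) ≤ Ord₁ p := by
  rw [stdLattice]
  apply Submodule.span_le.mpr
  rintro g hg
  simp only [Set.mem_insert_iff, Set.mem_singleton_iff] at hg
  rcases hg with rfl | rfl | rfl | rfl
  exacts [one_mem₁, i_mem₁, j_mem₁, k_mem₁]

lemma std_le_ord₂ : stdLattice (-1) (-p) ≤ Ord₂ p := by
  rw [stdLattice]
  apply Submodule.span_le.mpr
  rintro g hg
  simp only [Set.mem_insert_iff, Set.mem_singleton_iff] at hg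
  rcases hg with rfl | rfl | rfl | rfl
  exacts [one_mem₂, i_mem₂, j_mem₂, k_mem₂]

noncomputable def phi₁ (p : ℚ) : (Ord₁ p).toAddSubgroup →+ ZMod 2 × ZMod 2 :=
  AddMonoidHom.mk'
    (fun x => (num2 (2*(x:ℍ[ℚ,-1,-p]).imJ), num2 (2*(x:ℍ[ℚ,-1,-p]).imK)))
    (by
      rintro ⟨x, hx⟩ ⟨y, hy⟩
      rw [Submodule.mem_toAddSubgroup, mem_ord₁] at hx hy
      obtain ⟨a, b, c, d, h1, h2, h3, h4⟩ := hx
      obtain ⟨a', b', c', d', g1, g2, g3, g4⟩ := hy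
      show (num2 (2*(x+y).imJ), num2 (2*(x+y).imK))
        = (num2 (2*x.imJ) + num2 (2*y.imJ), num2 (2*x.imK) + num2 (2*y.imK))
      have e1 : 2*(x+y).imJ = ((c+c' : ℤ):ℚ) := by
        simp only [QuaternionAlgebra.imJ_add, h3, g3]; push_cast; ring
      have e2 : 2*(x+y).imK = ((d+d' : ℤ):ℚ) := by
        simp only [QuaternionAlgebra.imK_add, h4, g4]; push_cast; ring
      have e3 : 2*x.imJ = ((c : ℤ):ℚ) := by rw [h3]; ring
      have e4 : 2*y.imJ = ((c' : ℤ):ℚ) := by rw [g3]; ring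
      have e5 : 2*x.imK = ((d : ℤ):ℚ) := by rw [h4]; ring
      have e6 : 2*y.imK = ((d' : ℤ):ℚ) := by rw [g4]; ring
      rw [e1, e2, e3, e4, e5, e6, num2_intCast, num2_intCast, num2_intCast,
        num2_intCast, num2_intCast, num2_intCast]
      push_cast
      rfl)

lemma phi₁_val (x : ℍ[ℚ,-1,-p]) (hx : x ∈ (Ord₁ p).toAddSubgroup) (c d : ℤ)
    (hc : 2*x.imJ = (c:ℚ)) (hd : 2*x.imK = (d:ℚ)) :
    phi₁ p ⟨x, hx⟩ = ((c : ZMod 2), (d : ZMod 2)) := by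
  show (num2 (2*x.imJ), num2 (2*x.imK)) = _
  rw [hc, hd, num2_intCast, num2_intCast]

lemma phi₁_surj : Function.Surjective (phi₁ p) := by
  have hg₃ : ((2:ℚ)⁻¹ • (1 + (⟨0,0,1,0⟩:ℍ[ℚ,-1,-p]))) ∈ (Ord₁ p).toAddSubgroup := by
    rw [Submodule.mem_toAddSubgroup]; exact Submodule.subset_span (by simp)
  have hg₄ : ((2:ℚ)⁻¹ • ((⟨0,1,0,0⟩:ℍ[ℚ,-1,-p]) + ⟨0,0,0,1⟩)) ∈ (Ord₁ p).toAddSubgroup := by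
    rw [Submodule.mem_toAddSubgroup]; exact Submodule.subset_span (by simp)
  have hg₅ : ((2:ℚ)⁻¹ • (1 + (⟨0,0,1,0⟩:ℍ[ℚ,-1,-p])))
      + ((2:ℚ)⁻¹ • ((⟨0,1,0,0⟩:ℍ[ℚ,-1,-p]) + ⟨0,0,0,1⟩)) ∈ (Ord₁ p).toAddSubgroup :=
    AddSubgroup.add_mem _ hg₃ hg₄
  have v0 : phi₁ p 0 = ((0:ZMod 2), (0:ZMod 2)) := by
    have := phi₁_val (0 : ℍ[ℚ,-1,-p]) (by simp) 0 0 (by simp) (by simp)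
    convert this using 2 <;> rfl
  have v3 : phi₁ p ⟨_, hg₃⟩ = ((1 : ZMod 2), (0 : ZMod 2)) :=
    phi₁_val _ hg₃ 1 0 (by simp [QuaternionAlgebra.smul_mk])
      (by simp [QuaternionAlgebra.smul_mk])
  have v4 : phi₁ p ⟨_, hg₄⟩ = ((0 : ZMod 2), (1 : ZMod 2)) :=
    phi₁_val _ hg₄ 0 1 (by simp [QuaternionAlgebra.smul_mk])
      (by simp [QuaternionAlgebra.smul_mk])
  have v5 : phi₁ p ⟨_, hg₅⟩ = ((1 : ZMod 2), (1 : ZMod 2)) :=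
    phi₁_val _ hg₅ 1 1 (by simp [QuaternionAlgebra.smul_mk]; try ring)
      (by simp [QuaternionAlgebra.smul_mk]; try ring)
  have hz : ∀ z : ZMod 2 × ZMod 2, z = (0,0) ∨ z = (1,0) ∨ z = (0,1) ∨ z = (1,1) := by decide
  intro z
  rcases hz z with rfl | rfl | rfl | rfl
  · exact ⟨0, v0⟩
  · exact ⟨_, v3⟩
  · exact ⟨_, v4⟩
  · exact ⟨_, v5⟩

lemma two_zmod2 : ((2:ℤ) : ZMod 2) = 0 := rfl

lemma ker_phi₁ :
    ((stdLattice (-1) (-p)).toAddSubgroup.addSubgroupOf (Ord₁ p).toAddSubgroup)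
      = (phi₁ p).ker := by
  ext x
  obtain ⟨x, hx⟩ := x
  rw [AddSubgroup.mem_addSubgroupOf, AddMonoidHom.mem_ker]
  constructor
  · intro hstd
    rw [Submodule.mem_toAddSubgroup, mem_std] at hstd
    obtain ⟨a', b', c', d', e1, e2, e3, e4⟩ := hstd
    rw [phi₁_val x hx (2*c') (2*d') (by rw [e3]; push_cast; ring) (by rw [e4]; push_cast; ring)]
    have h2 : ∀ n : ℤ, ((2*n : ℤ) : ZMod 2) = 0 := by
      intro n; rw [Int.cast_mul, two_zmod2, zero_mul]
    rw [h2, h2]; rfl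
  · intro hker
    have hx' := (Submodule.mem_toAddSubgroup _).mp hx
    rw [mem_ord₁] at hx'
    obtain ⟨a, b, c, d, h1, h2, h3, h4⟩ := hx'
    rw [phi₁_val x hx c d (by rw [h3]; ring) (by rw [h4]; ring)] at hker
    have hc : (2:ℤ) ∣ c := by
      have : ((c:ℤ) : ZMod 2) = 0 := congrArg Prod.fst hker
      exact (ZMod.intCast_zmod_eq_zero_iff_dvd c 2).mp this
    have hd : (2:ℤ) ∣ d := by
      have : ((d:ℤ) : ZMod 2) = 0 := congrArg Prod.snd hker
      exact (ZMod.intCast_zmod_eq_zero_iff_dvd d 2).mp this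
    obtain ⟨c₀, rfl⟩ := hc
    obtain ⟨d₀, rfl⟩ := hd
    rw [Submodule.mem_toAddSubgroup, mem_std]
    exact ⟨a + c₀, b + d₀, c₀, d₀,
      by rw [h1]; push_cast; ring, by rw [h2]; push_cast; ring,
      by rw [h3]; push_cast; ring, by rw [h4]; push_cast; ring⟩

lemma index₁ :
    ((stdLattice (-1) (-p)).toAddSubgroup.addSubgroupOf (Ord₁ p).toAddSubgroup).index = 4 := by
  rw [ker_phi₁, AddSubgroup.index_ker]
  rw [AddMonoidHom.range_eq_top.mpr phi₁_surj]
  rw [Nat.card_congr AddSubgroup.topEquiv.toEquiv]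
  simp [Nat.card_eq_fintype_card]

end Index

section Index2

variable {p : ℚ}

noncomputable def phi₂ (p : ℚ) : (Ord₂ p).toAddSubgroup →+ ZMod 2 × ZMod 2 :=
  AddMonoidHom.mk'
    (fun x => (num2 (2*(x:ℍ[ℚ,-1,-p]).imK), num2 (-2*(x:ℍ[ℚ,-1,-p]).imJ)))
    (by
      rintro ⟨x, hx⟩ ⟨y, hy⟩
      rw [Submodule.mem_toAddSubgroup, mem_ord₂] at hx hy
      obtain ⟨a, b, c, d, h1, h2, h3, h4⟩ := hx
      obtain ⟨a', b', c', d', g1, g2, g3, g4⟩ := hy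
      show (num2 (2*(x+y).imK), num2 (-2*(x+y).imJ))
        = (num2 (2*x.imK) + num2 (2*y.imK), num2 (-2*x.imJ) + num2 (-2*y.imJ))
      have e1 : 2*(x+y).imK = ((c+c' : ℤ):ℚ) := by
        simp only [QuaternionAlgebra.imK_add, h4, g4]; push_cast; ring
      have e2 : -2*(x+y).imJ = ((d+d' : ℤ):ℚ) := by
        simp only [QuaternionAlgebra.imJ_add, h3, g3]; push_cast; ring
      have e3 : 2*x.imK = ((c : ℤ):ℚ) := by rw [h4]; ring
      have e4 : 2*y.imK = ((c' : ℤ):ℚ) := by rw [g4]; ring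
      have e5 : -2*x.imJ = ((d : ℤ):ℚ) := by rw [h3]; ring
      have e6 : -2*y.imJ = ((d' : ℤ):ℚ) := by rw [g3]; ring
      rw [e1, e2, e3, e4, e5, e6, num2_intCast, num2_intCast, num2_intCast,
        num2_intCast, num2_intCast, num2_intCast]
      push_cast
      rfl)

lemma phi₂_val (x : ℍ[ℚ,-1,-p]) (hx : x ∈ (Ord₂ p).toAddSubgroup) (c d : ℤ)
    (hc : 2*x.imK = (c:ℚ)) (hd : -2*x.imJ = (d:ℚ)) :
    phi₂ p ⟨x, hx⟩ = ((c : ZMod 2), (d : ZMod 2)) := by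
  show (num2 (2*x.imK), num2 (-2*x.imJ)) = _
  rw [hc, hd, num2_intCast, num2_intCast]

lemma phi₂_surj : Function.Surjective (phi₂ p) := by
  have hg₃ : ((2:ℚ)⁻¹ • (1 + (⟨0,0,0,1⟩:ℍ[ℚ,-1,-p]))) ∈ (Ord₂ p).toAddSubgroup := by
    rw [Submodule.mem_toAddSubgroup]; exact Submodule.subset_span (by simp)
  have hg₄ : ((2:ℚ)⁻¹ • ((⟨0,1,0,0⟩:ℍ[ℚ,-1,-p]) - ⟨0,0,1,0⟩)) ∈ (Ord₂ p).toAddSubgroup := by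
    rw [Submodule.mem_toAddSubgroup]; exact Submodule.subset_span (by simp)
  have hg₅ : ((2:ℚ)⁻¹ • (1 + (⟨0,0,0,1⟩:ℍ[ℚ,-1,-p])))
      + ((2:ℚ)⁻¹ • ((⟨0,1,0,0⟩:ℍ[ℚ,-1,-p]) - ⟨0,0,1,0⟩)) ∈ (Ord₂ p).toAddSubgroup :=
    AddSubgroup.add_mem _ hg₃ hg₄
  have v0 : phi₂ p 0 = ((0:ZMod 2), (0:ZMod 2)) := by
    have := phi₂_val (0 : ℍ[ℚ,-1,-p]) (by simp) 0 0 (by simp) (by simp)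
    convert this using 2 <;> rfl
  have v3 : phi₂ p ⟨_, hg₃⟩ = ((1 : ZMod 2), (0 : ZMod 2)) :=
    phi₂_val _ hg₃ 1 0 (by simp [QuaternionAlgebra.smul_mk]; try ring)
      (by simp [QuaternionAlgebra.smul_mk]; try ring)
  have v4 : phi₂ p ⟨_, hg₄⟩ = ((0 : ZMod 2), (1 : ZMod 2)) :=
    phi₂_val _ hg₄ 0 1 (by simp [QuaternionAlgebra.smul_mk]; try ring)
      (by simp [QuaternionAlgebra.smul_mk]; try ring)
  have v5 : phi₂ p ⟨_, hg₅⟩ = ((1 : ZMod 2), (1 : ZMod 2)) :=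
    phi₂_val _ hg₅ 1 1 (by simp [QuaternionAlgebra.smul_mk]; try ring)
      (by simp [QuaternionAlgebra.smul_mk]; try ring)
  have hz : ∀ z : ZMod 2 × ZMod 2, z = (0,0) ∨ z = (1,0) ∨ z = (0,1) ∨ z = (1,1) := by decide
  intro z
  rcases hz z with rfl | rfl | rfl | rfl
  · exact ⟨0, v0⟩
  · exact ⟨_, v3⟩
  · exact ⟨_, v4⟩
  · exact ⟨_, v5⟩

lemma ker_phi₂ :
    ((stdLattice (-1) (-p)).toAddSubgroup.addSubgroupOf (Ord₂ p).toAddSubgroup)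
      = (phi₂ p).ker := by
  ext x
  obtain ⟨x, hx⟩ := x
  rw [AddSubgroup.mem_addSubgroupOf, AddMonoidHom.mem_ker]
  constructor
  · intro hstd
    rw [Submodule.mem_toAddSubgroup, mem_std] at hstd
    obtain ⟨a', b', c', d', e1, e2, e3, e4⟩ := hstd
    rw [phi₂_val x hx (2*d') (-(2*c')) (by rw [e4]; push_cast; ring) (by rw [e3]; push_cast; ring)]
    have h2 : ∀ n : ℤ, ((2*n : ℤ) : ZMod 2) = 0 := by
      intro n; rw [Int.cast_mul, two_zmod2, zero_mul]
    have h2' : ∀ n : ℤ, ((-(2*n) : ℤ) : ZMod 2) = 0 := by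
      intro n; rw [Int.cast_neg, h2, neg_zero]
    rw [h2, h2']; rfl
  · intro hker
    have hx' := (Submodule.mem_toAddSubgroup _).mp hx
    rw [mem_ord₂] at hx'
    obtain ⟨a, b, c, d, h1, h2, h3, h4⟩ := hx'
    rw [phi₂_val x hx c d (by rw [h4]; ring) (by rw [h3]; ring)] at hker
    have hc : (2:ℤ) ∣ c := by
      have : ((c:ℤ) : ZMod 2) = 0 := congrArg Prod.fst hker
      exact (ZMod.intCast_zmod_eq_zero_iff_dvd c 2).mp this
    have hd : (2:ℤ) ∣ d := by
      have : ((d:ℤ) : ZMod 2) = 0 := congrArg Prod.snd hker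
      exact (ZMod.intCast_zmod_eq_zero_iff_dvd d 2).mp this
    obtain ⟨c₀, rfl⟩ := hc
    obtain ⟨d₀, rfl⟩ := hd
    rw [Submodule.mem_toAddSubgroup, mem_std]
    exact ⟨a + c₀, b + d₀, -d₀, c₀,
      by rw [h1]; push_cast; ring, by rw [h2]; push_cast; ring,
      by rw [h3]; push_cast; ring, by rw [h4]; push_cast; ring⟩

lemma index₂ :
    ((stdLattice (-1) (-p)).toAddSubgroup.addSubgroupOf (Ord₂ p).toAddSubgroup).index = 4 := by
  rw [ker_phi₂, AddSubgroup.index_ker]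
  rw [AddMonoidHom.range_eq_top.mpr phi₂_surj]
  rw [Nat.card_congr AddSubgroup.topEquiv.toEquiv]
  simp [Nat.card_eq_fintype_card]

end Index2

/-- For a prime `p ≡ 3 (mod 4)`, each of `O₁ = ℤ·1 + ℤ·i + ℤ·(1+j)/2 + ℤ·(i+k)/2` and
`O₂ = ℤ·1 + ℤ·i + ℤ·(1+k)/2 + ℤ·(i−j)/2` is a maximal order in `ℍ[ℚ, −1, −p]`, each contains
`ℤ·1 + ℤ·i + ℤ·j + ℤ·k`, and the quotient of each by that subring, as an additive group, has
exactly `4` elements. -/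
theorem maximal_orders_disc_four (p : ℕ) (hp : p.Prime) (hp3 : p % 4 = 3) :
    (IsMaximalOrder ((Ord₁ (p:ℚ) : Set ℍ[ℚ, -1, -(p:ℚ)]))
      ∧ stdLattice (-1) (-(p:ℚ)) ≤ Ord₁ (p:ℚ)
      ∧ ((stdLattice (-1) (-(p:ℚ))).toAddSubgroup.addSubgroupOf
          (Ord₁ (p:ℚ)).toAddSubgroup).index = 4)
    ∧ (IsMaximalOrder ((Ord₂ (p:ℚ) : Set ℍ[ℚ, -1, -(p:ℚ)]))
      ∧ stdLattice (-1) (-(p:ℚ)) ≤ Ord₂ (p:ℚ)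
      ∧ ((stdLattice (-1) (-(p:ℚ))).toAddSubgroup.addSubgroupOf
          (Ord₂ (p:ℚ)).toAddSubgroup).index = 4) := by
  obtain ⟨mn, hmn⟩ : ∃ mn : ℕ, p = 4*mn+3 := ⟨p/4, by omega⟩
  have hpm : (p:ℚ) = 4*(((mn:ℤ)):ℚ)+3 := by
    exact_mod_cast congrArg (fun n : ℕ => (n:ℚ)) hmn
  exact ⟨⟨⟨isOrder₁ hpm, fun O' hO' hsub => max₁ p hp hp3 mn hpm O' hO' hsub⟩,
      std_le_ord₁, index₁⟩,
    ⟨⟨isOrder₂ hpm, fun O' hO' hsub => max₂ p hp hp3 mn hpm O' hO' hsub⟩,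
      std_le_ord₂, index₂⟩⟩
end

section
/- Let p ≡ 3 (mod 4) be a prime and work in ℍ[ℚ, −1, −p]. Every order of ℍ[ℚ, −1, −p] that contains both i and j is contained in O₁ := ℤ·1 + ℤ·i + ℤ·(1+j)/2 + ℤ·(i+k)/2 or in O₂ := ℤ·1 + ℤ·i + ℤ·(1+k)/2 + ℤ·(i−j)/2. -/
open Quaternion

/- ### Auxiliary lemmas -/

lemma aux_zmod4_class : ∀ α β γ δ : ZMod 4, α^2+β^2+3*γ^2+3*δ^2 = 0 →
    (α.val % 2 = γ.val % 2 ∧ β.val % 2 = δ.val % 2) ∨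
    (α.val % 2 = δ.val % 2 ∧ β.val % 2 = γ.val % 2) := by decide

lemma aux_int_class (p A B C D n : ℤ) (hp : p % 4 = 3) (h : A^2+B^2+p*C^2+p*D^2 = 4*n) :
    (A % 2 = C % 2 ∧ B % 2 = D % 2) ∨ (A % 2 = D % 2 ∧ B % 2 = C % 2) := by
  have hpc : (p : ZMod 4) = 3 := by
    have h3 : p ≡ 3 [ZMOD 4] := by unfold Int.ModEq; omega
    have := (ZMod.intCast_eq_intCast_iff _ _ _).mpr h3
    simpa using this
  have h4 : (A : ZMod 4)^2 + (B:ZMod 4)^2 + 3*(C:ZMod 4)^2 + 3*(D:ZMod 4)^2 = 0 := by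
    have hc := congrArg (Int.cast : ℤ → ZMod 4) h
    push_cast at hc
    rw [hpc] at hc
    rw [hc]
    simp [show (4:ZMod 4) = 0 from rfl]
  have hcl := aux_zmod4_class _ _ _ _ h4
  have hA := ZMod.val_intCast (n := 4) A
  have hB := ZMod.val_intCast (n := 4) B
  have hC := ZMod.val_intCast (n := 4) C
  have hD := ZMod.val_intCast (n := 4) D
  omega

lemma aux_dvd_of_sq_add_sq (p : ℕ) (hp : p.Prime) (hp3 : p % 4 = 3) (C D : ℤ)
    (h : (p:ℤ) ∣ C^2 + D^2) : (p:ℤ) ∣ C ∧ (p:ℤ) ∣ D := by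
  haveI := Fact.mk hp
  have key : ∀ X Y : ℤ, (p:ℤ) ∣ X^2 + Y^2 → (p:ℤ) ∣ Y := by
    intro X Y hXY
    by_contra hY
    have hY' : (Y : ZMod p) ≠ 0 := by
      rwa [Ne, ZMod.intCast_zmod_eq_zero_iff_dvd]
    have h0 : (X : ZMod p)^2 + (Y : ZMod p)^2 = 0 := by
      have := (ZMod.intCast_zmod_eq_zero_iff_dvd _ p).mpr hXY
      push_cast at this
      linear_combination this
    have hsq : ((X : ZMod p) * (Y:ZMod p)⁻¹)^2 = -1 := by
      field_simp [mul_pow]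
      linear_combination h0
    have : IsSquare (-1 : ZMod p) := ⟨_, by rw [← sq]; exact hsq.symm⟩
    rw [ZMod.exists_sq_eq_neg_one_iff] at this
    exact this hp3
  exact ⟨key D C (by rwa [add_comm] at h), key C D h⟩

lemma aux_mem_Ord₁ (p : ℚ) (x : ℍ[ℚ, -1, -p]) (A B C D : ℤ)
    (h0 : x.re = A/2) (h1 : x.imI = B/2) (h2 : x.imJ = C/2) (h3 : x.imK = D/2)
    (hAC : A % 2 = C % 2) (hBD : B % 2 = D % 2) : x ∈ Ord₁ p := by
  obtain ⟨s, hs⟩ : ∃ s : ℤ, A = C + 2*s := ⟨(A-C)/2, by omega⟩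
  obtain ⟨t, ht⟩ : ∃ t : ℤ, B = D + 2*t := ⟨(B-D)/2, by omega⟩
  have hx : x = s • (1 : ℍ[ℚ,-1,-p]) + t • (⟨0,1,0,0⟩ : ℍ[ℚ,-1,-p])
      + C • (((2:ℚ)⁻¹) • (1 + (⟨0,0,1,0⟩ : ℍ[ℚ, -1, -p])))
      + D • (((2:ℚ)⁻¹) • ((⟨0,1,0,0⟩ : ℍ[ℚ, -1, -p]) + ⟨0,0,0,1⟩)) := by
    ext <;> simp [h0, h1, h2, h3, hs, ht] <;> push_cast <;> ring
  rw [hx]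
  refine Submodule.add_mem _ (Submodule.add_mem _ (Submodule.add_mem _ ?_ ?_) ?_) ?_ <;>
    exact Submodule.smul_mem _ _ (Submodule.subset_span (by simp))

lemma aux_mem_Ord₂ (p : ℚ) (x : ℍ[ℚ, -1, -p]) (A B C D : ℤ)
    (h0 : x.re = A/2) (h1 : x.imI = B/2) (h2 : x.imJ = C/2) (h3 : x.imK = D/2)
    (hAD : A % 2 = D % 2) (hBC : B % 2 = C % 2) : x ∈ Ord₂ p := by
  obtain ⟨s, hs⟩ : ∃ s : ℤ, A = D + 2*s := ⟨(A-D)/2, by omega⟩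
  obtain ⟨t, ht⟩ : ∃ t : ℤ, B = -C + 2*t := ⟨(B+C)/2, by omega⟩
  have hx : x = s • (1 : ℍ[ℚ,-1,-p]) + t • (⟨0,1,0,0⟩ : ℍ[ℚ,-1,-p])
      + D • (((2:ℚ)⁻¹) • (1 + (⟨0,0,0,1⟩ : ℍ[ℚ, -1, -p])))
      + (-C) • (((2:ℚ)⁻¹) • ((⟨0,1,0,0⟩ : ℍ[ℚ, -1, -p]) - ⟨0,0,1,0⟩)) := by
    ext <;> simp [h0, h1, h2, h3, hs, ht] <;> push_cast <;> ring
  rw [hx]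
  refine Submodule.add_mem _ (Submodule.add_mem _ (Submodule.add_mem _ ?_ ?_) ?_) ?_ <;>
    exact Submodule.smul_mem _ _ (Submodule.subset_span (by simp))

lemma aux_exists_coords (p : ℕ) (hp : p.Prime) (hp3 : p % 4 = 3)
    (O : Set ℍ[ℚ, -1, -(p:ℚ)]) (hO : IsOrder O)
    (hi : (⟨0,1,0,0⟩ : ℍ[ℚ, -1, -(p:ℚ)]) ∈ O)
    (hj : (⟨0,0,1,0⟩ : ℍ[ℚ, -1, -(p:ℚ)]) ∈ O)
    (x : ℍ[ℚ, -1, -(p:ℚ)]) (hx : x ∈ O) :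
    ∃ A B C D : ℤ, x.re = (A:ℚ)/2 ∧ x.imI = (B:ℚ)/2 ∧ x.imJ = (C:ℚ)/2 ∧ x.imK = (D:ℚ)/2 := by
  obtain ⟨⟨S, hS⟩, -, hTN⟩ := hO
  have hp0 : (p:ℚ) ≠ 0 := Nat.cast_ne_zero.mpr hp.ne_zero
  have hxS : x ∈ S := by rw [← SetLike.mem_coe, hS]; exact hx
  have hiS : (⟨0,1,0,0⟩ : ℍ[ℚ, -1, -(p:ℚ)]) ∈ S := by rw [← SetLike.mem_coe, hS]; exact hi
  have hjS : (⟨0,0,1,0⟩ : ℍ[ℚ, -1, -(p:ℚ)]) ∈ S := by rw [← SetLike.mem_coe, hS]; exact hj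
  have hkS : (⟨0,0,0,1⟩ : ℍ[ℚ, -1, -(p:ℚ)]) ∈ S := by
    have := S.mul_mem hiS hjS
    have hij : (⟨0,1,0,0⟩ * ⟨0,0,1,0⟩ : ℍ[ℚ, -1, -(p:ℚ)]) = ⟨0,0,0,1⟩ := by ext <;> simp
    rwa [hij] at this
  have memO : ∀ z : ℍ[ℚ, -1, -(p:ℚ)], z ∈ S → z ∈ O := by
    intro z hz; rw [← hS]; exact hz
  obtain ⟨A, hA⟩ := (hTN x (memO x hxS)).1
  obtain ⟨tB, htB⟩ := (hTN _ (memO _ (S.mul_mem hxS hiS))).1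
  obtain ⟨tC, htC⟩ := (hTN _ (memO _ (S.mul_mem hxS hjS))).1
  obtain ⟨tD, htD⟩ := (hTN _ (memO _ (S.mul_mem hxS hkS))).1
  obtain ⟨n, hn⟩ := (hTN x (memO x hxS)).2
  simp [Trd] at hA htB htC htD
  simp [Nrd] at hn
  have e0 : x.re = (A:ℚ)/2 := by linarith
  have e1 : x.imI = ((-tB : ℤ):ℚ)/2 := by push_cast; linarith
  have hnrd : x.re^2 + x.imI^2 + (p:ℚ)*x.imJ^2 + (p:ℚ)*x.imK^2 = n := by rw [← hn]; ring
  have f0 : (A:ℚ) = 2*x.re := by linarith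
  have f1 : (tB:ℚ) = -(2*x.imI) := by linarith
  have f2 : (tC:ℚ) = -(2*(p:ℚ)*x.imJ) := by linarith
  have f3 : (tD:ℚ) = -(2*(p:ℚ)*x.imK) := by linarith
  have hqint : (p:ℤ)*A^2 + (p:ℤ)*tB^2 + tC^2 + tD^2 = 4*p*n := by
    have : (((p:ℤ)*A^2 + (p:ℤ)*tB^2 + tC^2 + tD^2 : ℤ):ℚ) = ((4*(p:ℤ)*n : ℤ):ℚ) := by
      push_cast
      rw [f0, f1, f2, f3]
      linear_combination 4*(p:ℚ)*hnrd
    exact_mod_cast this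
  have hdvd : (p:ℤ) ∣ tC^2 + tD^2 := ⟨4*n - A^2 - tB^2, by linarith [hqint]⟩
  obtain ⟨hdC, hdD⟩ := aux_dvd_of_sq_add_sq p hp hp3 _ _ hdvd
  obtain ⟨C, hC⟩ := hdC
  obtain ⟨D, hD⟩ := hdD
  refine ⟨A, -tB, -C, -D, e0, e1, ?_, ?_⟩
  · have hCq : (tC:ℚ) = (p:ℚ)*(C:ℚ) := by exact_mod_cast congrArg (Int.cast : ℤ → ℚ) hC
    have h' : (p:ℚ)*(2*x.imJ) = (p:ℚ)*(-(C:ℚ)) := by rw [hCq] at f2; linarith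
    have := mul_left_cancel₀ hp0 h'
    push_cast
    linarith
  · have hDq : (tD:ℚ) = (p:ℚ)*(D:ℚ) := by exact_mod_cast congrArg (Int.cast : ℤ → ℚ) hD
    have h' : (p:ℚ)*(2*x.imK) = (p:ℚ)*(-(D:ℚ)) := by rw [hDq] at f3; linarith
    have := mul_left_cancel₀ hp0 h'
    push_cast
    linarith

/-- Parity classification for elements of an order, given half-integer coordinates. -/
lemma aux_class (p : ℕ) (hp : p.Prime) (hp3 : p % 4 = 3)
    (O : Set ℍ[ℚ, -1, -(p:ℚ)]) (hO : IsOrder O)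
    (x : ℍ[ℚ, -1, -(p:ℚ)]) (hx : x ∈ O) (A B C D : ℤ)
    (h0 : x.re = (A:ℚ)/2) (h1 : x.imI = (B:ℚ)/2) (h2 : x.imJ = (C:ℚ)/2) (h3 : x.imK = (D:ℚ)/2) :
    (A % 2 = C % 2 ∧ B % 2 = D % 2) ∨ (A % 2 = D % 2 ∧ B % 2 = C % 2) := by
  obtain ⟨n, hn⟩ := (hO.2.2 x hx).2
  simp [Nrd] at hn
  have hnrd : x.re^2 + x.imI^2 + (p:ℚ)*x.imJ^2 + (p:ℚ)*x.imK^2 = n := by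
    rw [← hn]; ring
  rw [h0, h1, h2, h3] at hnrd
  have hqint : A^2 + B^2 + (p:ℤ)*C^2 + (p:ℤ)*D^2 = 4*n := by
    have : ((A^2 + B^2 + (p:ℤ)*C^2 + (p:ℤ)*D^2 : ℤ) : ℚ) = ((4*n : ℤ) : ℚ) := by
      push_cast
      nlinarith [hnrd]
    exact_mod_cast this
  have hp3' : (p:ℤ) % 4 = 3 := by omega
  exact aux_int_class (p:ℤ) A B C D n hp3' hqint

/-- For a prime `p ≡ 3 (mod 4)`, every order of `ℍ[ℚ, −1, −p]` containing both `i` and `j` is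
contained in `O₁ = ℤ·1 + ℤ·i + ℤ·(1+j)/2 + ℤ·(i+k)/2` or in
`O₂ = ℤ·1 + ℤ·i + ℤ·(1+k)/2 + ℤ·(i−j)/2`. -/
theorem order_containing_i_j_subset (p : ℕ) (hp : p.Prime) (hp3 : p % 4 = 3)
    (O : Set ℍ[ℚ, -1, -(p:ℚ)]) (hO : IsOrder O)
    (hi : (⟨0,1,0,0⟩ : ℍ[ℚ, -1, -(p:ℚ)]) ∈ O)
    (hj : (⟨0,0,1,0⟩ : ℍ[ℚ, -1, -(p:ℚ)]) ∈ O) :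
    O ⊆ (Ord₁ (p:ℚ) : Set ℍ[ℚ, -1, -(p:ℚ)]) ∨ O ⊆ (Ord₂ (p:ℚ) : Set ℍ[ℚ, -1, -(p:ℚ)]) := by
  by_cases h1 : O ⊆ (Ord₁ (p:ℚ) : Set ℍ[ℚ, -1, -(p:ℚ)])
  · exact Or.inl h1
  right
  rw [Set.not_subset] at h1
  obtain ⟨y, hy, hyn⟩ := h1
  obtain ⟨Ay, By, Cy, Dy, hy0, hy1, hy2, hy3⟩ :=
    aux_exists_coords p hp hp3 O hO hi hj y hy
  have hyclass := aux_class p hp hp3 O hO y hy Ay By Cy Dy hy0 hy1 hy2 hy3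
  have hynot1 : ¬(Ay % 2 = Cy % 2 ∧ By % 2 = Dy % 2) := by
    rintro ⟨u, v⟩
    exact hyn (aux_mem_Ord₁ (p:ℚ) y Ay By Cy Dy hy0 hy1 hy2 hy3 u v)
  have hy2class : Ay % 2 = Dy % 2 ∧ By % 2 = Cy % 2 := by tauto
  intro x hx
  obtain ⟨A, B, C, D, h0, h1', h2, h3⟩ := aux_exists_coords p hp hp3 O hO hi hj x hx
  have hxclass := aux_class p hp hp3 O hO x hx A B C D h0 h1' h2 h3
  by_cases hx2 : A % 2 = D % 2 ∧ B % 2 = C % 2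
  · exact aux_mem_Ord₂ (p:ℚ) x A B C D h0 h1' h2 h3 hx2.1 hx2.2
  have hx1 : A % 2 = C % 2 ∧ B % 2 = D % 2 := by tauto
  -- consider x + y
  obtain ⟨S, hS⟩ := hO.1
  have hz : x + y ∈ O := by
    rw [← hS] at hx hy ⊢
    exact S.add_mem hx hy
  have hz0 : (x+y).re = ((A+Ay : ℤ):ℚ)/2 := by push_cast; simp [h0, hy0]; ring
  have hz1 : (x+y).imI = ((B+By : ℤ):ℚ)/2 := by push_cast; simp [h1', hy1]; ring
  have hz2 : (x+y).imJ = ((C+Cy : ℤ):ℚ)/2 := by push_cast; simp [h2, hy2]; ring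
  have hz3 : (x+y).imK = ((D+Dy : ℤ):ℚ)/2 := by push_cast; simp [h3, hy3]; ring
  have hzclass := aux_class p hp hp3 O hO (x+y) hz (A+Ay) (B+By) (C+Cy) (D+Dy)
    hz0 hz1 hz2 hz3
  omega
end

section
/- Let O be a subring of B = ℍ[ℚ, −a, −b] (a, b positive rationals) and let I ⊆ O be a left O-submodule. Let N be a positive integer such that x·ȳ lies in the set N·O for all x, y ∈ I. Then for every α ∈ I, the set I·(ᾱ/N) := { x·ᾱ·(1/N) : x ∈ I } is contained in O and is a left O-submodule of O; moreover, if N equals the greatest common divisor of the integers Nrd(x) over all x ∈ I and α ≠ 0, then the greatest common divisor of Nrd(y) over all y ∈ I·(ᾱ/N) equals Nrd(α)/N. -/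
open Quaternion

/-- `N` is the greatest common divisor of the (integer) reduced norms of the elements of `S`:
every element of `S` has reduced norm an integer divisible by `N`, and any natural number
dividing all these norms divides `N`. -/
def IsNormGcd {a b : ℚ} (S : Set ℍ[ℚ, a, b]) (N : ℕ) : Prop :=
  (∀ x ∈ S, ∃ m : ℤ, Nrd x = (m : ℚ) ∧ (N : ℤ) ∣ m) ∧
  ∀ d : ℕ, (∀ x ∈ S, ∃ m : ℤ, Nrd x = (m : ℚ) ∧ (d : ℤ) ∣ m) → d ∣ N

lemma Nrd_mul {a b : ℚ} (x y : ℍ[ℚ, a, b]) : Nrd (x * y) = Nrd x * Nrd y := by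
  simp only [Nrd, QuaternionAlgebra.re_mul, QuaternionAlgebra.re_star,
    QuaternionAlgebra.imI_star, QuaternionAlgebra.imJ_star, QuaternionAlgebra.imK_star,
    QuaternionAlgebra.imI_mul, QuaternionAlgebra.imJ_mul, QuaternionAlgebra.imK_mul]
  ring

lemma Nrd_star {a b : ℚ} (x : ℍ[ℚ, a, b]) : Nrd (star x) = Nrd x := by
  simp only [Nrd, QuaternionAlgebra.re_mul, QuaternionAlgebra.re_star,
    QuaternionAlgebra.imI_star, QuaternionAlgebra.imJ_star, QuaternionAlgebra.imK_star]
  ring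

lemma Nrd_smul {a b : ℚ} (c : ℚ) (x : ℍ[ℚ, a, b]) : Nrd (c • x) = c^2 * Nrd x := by
  simp only [Nrd, QuaternionAlgebra.star_smul, smul_mul_smul_comm,
    QuaternionAlgebra.re_smul, smul_eq_mul]
  ring

lemma Nrd_pos {a b : ℚ} (ha : 0 < a) (hb : 0 < b) (x : ℍ[ℚ, -a, -b]) (hx : x ≠ 0) :
    0 < Nrd x := by
  have h : Nrd x = x.re^2 + a * x.imI^2 + b * x.imJ^2 + a*b*x.imK^2 := by
    simp only [Nrd, QuaternionAlgebra.re_mul, QuaternionAlgebra.re_star,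
      QuaternionAlgebra.imI_star, QuaternionAlgebra.imJ_star, QuaternionAlgebra.imK_star]
    ring
  rcases lt_or_eq_of_le (by positivity : (0:ℚ) ≤ x.re^2 + a * x.imI^2 + b * x.imJ^2 + a*b*x.imK^2) with h' | h'
  · rw [h]; exact h'
  · exfalso; apply hx
    have hab := mul_pos ha hb
    have s0 := sq_nonneg x.re
    have s1 := sq_nonneg x.imI
    have s2 := sq_nonneg x.imJ
    have s3 := sq_nonneg x.imK
    have h0 : x.re = 0 := by nlinarith
    have h1 : x.imI = 0 := by
      have : x.imI^2 = 0 := by nlinarith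
      exact pow_eq_zero_iff (n := 2) (by norm_num) |>.mp this
    have h2 : x.imJ = 0 := by
      have : x.imJ^2 = 0 := by nlinarith
      exact pow_eq_zero_iff (n := 2) (by norm_num) |>.mp this
    have h3 : x.imK = 0 := by
      have : x.imK^2 = 0 := by nlinarith
      exact pow_eq_zero_iff (n := 2) (by norm_num) |>.mp this
    ext <;> simp [h0, h1, h2, h3]

/-- Let `O` be a subring of `B = ℍ[ℚ, −a, −b]` and `I ⊆ O` a left `O`-submodule, and let `N > 0`
be an integer with `x·ȳ ∈ N·O` for all `x, y ∈ I`.  Then for every `α ∈ I` the set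
`I·(ᾱ/N) = { x·ᾱ/N : x ∈ I }` is contained in `O` and is a left `O`-submodule of `O`; moreover
if `N = gcd { Nrd x : x ∈ I }` and `α ≠ 0`, then `gcd { Nrd y : y ∈ I·(ᾱ/N) } = Nrd α / N`. -/
theorem ideal_norm_rep (a b : ℚ) (ha : 0 < a) (hb : 0 < b)
    (O : Subring ℍ[ℚ, -a, -b]) (I : Set ℍ[ℚ, -a, -b])
    (hI0 : (0 : ℍ[ℚ, -a, -b]) ∈ I)
    (hIadd : ∀ x ∈ I, ∀ y ∈ I, x + y ∈ I)
    (hIneg : ∀ x ∈ I, -x ∈ I)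
    (hIO : I ⊆ (O : Set ℍ[ℚ, -a, -b]))
    (hImod : ∀ o ∈ O, ∀ x ∈ I, o * x ∈ I)
    (N : ℕ) (hN : 0 < N)
    (hNO : ∀ x ∈ I, ∀ y ∈ I, ∃ z ∈ O, x * star y = (N : ℍ[ℚ, -a, -b]) * z)
    (α : ℍ[ℚ, -a, -b]) (hα : α ∈ I) :
    ((fun x => ((N : ℚ)⁻¹) • (x * star α)) '' I ⊆ (O : Set ℍ[ℚ, -a, -b]))
    ∧ ((0 : ℍ[ℚ, -a, -b]) ∈ (fun x => ((N : ℚ)⁻¹) • (x * star α)) '' I)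
    ∧ (∀ u ∈ (fun x => ((N : ℚ)⁻¹) • (x * star α)) '' I,
        ∀ v ∈ (fun x => ((N : ℚ)⁻¹) • (x * star α)) '' I,
          u + v ∈ (fun x => ((N : ℚ)⁻¹) • (x * star α)) '' I)
    ∧ (∀ u ∈ (fun x => ((N : ℚ)⁻¹) • (x * star α)) '' I,
        -u ∈ (fun x => ((N : ℚ)⁻¹) • (x * star α)) '' I)
    ∧ (∀ o ∈ O, ∀ u ∈ (fun x => ((N : ℚ)⁻¹) • (x * star α)) '' I,
        o * u ∈ (fun x => ((N : ℚ)⁻¹) • (x * star α)) '' I)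
    ∧ (IsNormGcd I N → α ≠ 0 →
        ∃ M : ℕ, (M : ℚ) * (N : ℚ) = Nrd α
          ∧ IsNormGcd ((fun x => ((N : ℚ)⁻¹) • (x * star α)) '' I) M) := by
  have hN' : (N : ℚ) ≠ 0 := by positivity
  set f : ℍ[ℚ, -a, -b] → ℍ[ℚ, -a, -b] := fun x => ((N : ℚ)⁻¹) • (x * star α) with hf
  -- f x computes Nrd as product
  have hNrdf : ∀ x : ℍ[ℚ, -a, -b], Nrd (f x) = ((N:ℚ)⁻¹)^2 * (Nrd x * Nrd α) := by
    intro x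
    rw [hf]
    simp only [Nrd_smul, Nrd_mul, Nrd_star]
  refine ⟨?_, ?_, ?_, ?_, ?_, ?_⟩
  · rintro _ ⟨x, hx, rfl⟩
    obtain ⟨z, hz, heq⟩ := hNO x hx α hα
    have hz' : f x = z := by
      show ((N : ℚ)⁻¹) • (x * star α) = z
      rw [heq]
      have : (N : ℍ[ℚ, -a, -b]) * z = (N:ℚ) • z := by
        rw [← QuaternionAlgebra.coe_mul_eq_smul]; norm_cast
      rw [this, smul_smul, inv_mul_cancel₀ hN', one_smul]
    exact hz' ▸ hz
  · exact ⟨0, hI0, by simp [hf]⟩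
  · rintro _ ⟨x, hx, rfl⟩ _ ⟨y, hy, rfl⟩
    exact ⟨x + y, hIadd x hx y hy, by simp [hf, add_mul, smul_add]⟩
  · rintro _ ⟨x, hx, rfl⟩
    exact ⟨-x, hIneg x hx, by simp [hf]⟩
  · rintro o ho _ ⟨x, hx, rfl⟩
    refine ⟨o * x, hImod o ho x hx, ?_⟩
    simp only [hf, mul_smul_comm, mul_assoc]
  · rintro ⟨hG1, hG2⟩ hα0
    obtain ⟨m, hm, k, hk⟩ := hG1 α hα
    have hmpos : (0:ℚ) < (m:ℚ) := hm ▸ Nrd_pos ha hb α hα0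
    have hkpos : 0 < k := by
      by_contra hkn
      push_neg at hkn
      have : (m:ℚ) ≤ 0 := by
        have : m ≤ 0 := hk ▸ mul_nonpos_of_nonneg_of_nonpos (by positivity) hkn
        exact_mod_cast this
      linarith
    refine ⟨k.toNat, ?_, ?_, ?_⟩
    · have : ((k.toNat : ℤ) : ℚ) * (N:ℚ) = (m:ℚ) := by
        rw [Int.toNat_of_nonneg hkpos.le]
        push_cast [hk]; ring
      rw [hm]; exact_mod_cast this
    · rintro _ ⟨x, hx, rfl⟩
      obtain ⟨mx, hmx, kx, hkx⟩ := hG1 x hx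
      refine ⟨kx * k, ?_, ?_⟩
      · rw [hNrdf, hmx, hm, hkx, hk]
        push_cast
        field_simp
        try ring
      · rw [Int.toNat_of_nonneg hkpos.le]
        exact dvd_mul_left k kx
    · intro d hd
      -- for every x ∈ I, with Nrd x = N * kx, we get (d : ℤ) ∣ kx * k
      have key : ∀ x ∈ I, ∀ kx : ℤ, Nrd x = ((N * kx : ℤ) : ℚ) → (d:ℤ) ∣ kx * k := by
        intro x hx kx hkx
        obtain ⟨m', hm', hdm'⟩ := hd _ ⟨x, hx, rfl⟩
        have : Nrd (f x) = ((kx * k : ℤ) : ℚ) := by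
          rw [hNrdf, hkx, hm, hk]
          push_cast
          field_simp
          try ring
        have hmm : m' = kx * k := by
          have : ((m':ℤ):ℚ) = ((kx * k : ℤ) : ℚ) := by rw [← hm']; exact this
          exact_mod_cast this
        rwa [hmm] at hdm'
      have hdk : (d:ℤ) ∣ k * k := key α hα k (by rw [hm, hk]; try push_cast; try ring)
      have hdne : d ≠ 0 := by
        rintro rfl
        have : k * k = 0 := by simpa using hdk
        rcases mul_eq_zero.mp this with h | h <;> omega
      -- d' := d / gcd d k.toNat is coprime to k.toNat / gcd and divides every kx
      set M := k.toNat with hM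
      have hMk : (M : ℤ) = k := Int.toNat_of_nonneg hkpos.le
      set g := Nat.gcd d M with hg
      have hgpos : 0 < g := Nat.gcd_pos_of_pos_left M (Nat.pos_of_ne_zero hdne)
      set d' := d / g with hd'
      set M' := M / g with hM'
      have hdd : g * d' = d := Nat.mul_div_cancel' (Nat.gcd_dvd_left d M) 
      have hMM : g * M' = M := Nat.mul_div_cancel' (Nat.gcd_dvd_right d M)
      have hco : Nat.Coprime d' M' := Nat.coprime_div_gcd_div_gcd hgpos
      -- d' divides every kx
      have hdvd' : ∀ x ∈ I, ∀ kx : ℤ, Nrd x = ((N * kx : ℤ) : ℚ) → (d':ℤ) ∣ kx := by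
        intro x hx kx hkx
        have h1 : (d:ℤ) ∣ kx * k := key x hx kx hkx
        have h2 : ((g:ℤ) * d') ∣ kx * ((g:ℤ) * M') := by
          rw [show ((g:ℤ) * d') = (d:ℤ) from by exact_mod_cast hdd,
            show ((g:ℤ) * M') = (M:ℤ) from by exact_mod_cast hMM, hMk]
          exact h1
        have hgz : (g:ℤ) ≠ 0 := by exact_mod_cast hgpos.ne'
        have h3 : (d':ℤ) ∣ kx * (M':ℤ) := by
          have := (mul_dvd_mul_iff_left hgz (b := (d':ℤ)) (c := kx * (M':ℤ))).mp
            (by rw [show (g:ℤ) * (kx * (M':ℤ)) = kx * ((g:ℤ) * (M':ℤ)) by ring]; exact h2)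
          exact this
        exact Int.dvd_of_dvd_mul_left_of_gcd_one h3
          (by rw [Int.gcd_natCast_natCast]; exact hco)
      -- hence d' * N divides all Nrd x, so d' * N ∣ N, so d' = 1
      have hdN : d' * N ∣ N := by
        apply hG2
        intro x hx
        obtain ⟨mx, hmx, kx, hkx⟩ := hG1 x hx
        refine ⟨mx, hmx, ?_⟩
        obtain ⟨c, hc⟩ : (d':ℤ) ∣ kx := hdvd' x hx kx (by rw [hmx, hkx]; try push_cast; try ring)
        rw [hkx]
        refine ⟨c, ?_⟩
        push_cast
        rw [hc]; ring
      have hd1 : d' = 1 := Nat.eq_one_of_dvd_one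
        ((Nat.mul_dvd_mul_iff_right hN).mp (by simpa using hdN))
      calc d = g * d' := hdd.symm
        _ = g := by rw [hd1, mul_one]
        _ ∣ M := Nat.gcd_dvd_right d M
end
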